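/- Let G be a Z2-graded Lie algebra over a field k (G = G0 ⊕ G1 as vector spaces, [G0,G0] ⊆ G0, [G0,G1] ⊆ G1, [G1,G1] ⊆ G0), let R : G1 → G0 be linear, set G₊ = G0, G₋ = {m − R(m) : m ∈ G1}, and for X, Y ∈ G1 define D(X,Y) = R([R(X),Y] − [R(Y),X]) − [R(X),R(Y)] − [X,Y] ∈ G0. Let π₊ : G → G₊ be the projection onto G₊ along G₋ and let H be the linear span of {π₊([a,b]) : a, b ∈ G₋} (in this situation H equals the span of all D(X,Y)). Then the conditions (0.9): [H, G₊] ⊆ G₊ and [H, G₋] ⊆ G₋ hold if and only if [D(X,Y), R(Z)] = R([D(X,Y), Z]) for all X, Y, Z ∈ G1. -/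
import Mathlib


/-- With `G = G0 ⊕ G1` Z2-graded, `R : G1 → G0` linear, `G₊ = G0`,
`G₋ = {m − R(m) : m ∈ G1}`, `π₊` the projection onto `G₊` along `G₋`,
`H = span{π₊([a,b]) : a,b ∈ G₋}`, and
`D(X,Y) = R([R X,Y] − [R Y,X]) − [R X,R Y] − [X,Y]`, the conditions (0.9)
`[H,G₊] ⊆ G₊` and `[H,G₋] ⊆ G₋` hold iff
`[D(X,Y), R(Z)] = R([D(X,Y), Z])` for all `X,Y,Z ∈ G1`. -/
theorem stmt_9 {k G : Type*} [Field k] [LieRing G] [LieAlgebra k G]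
    (G0 G1 : Submodule k G)
    (hG01 : IsCompl G0 G1)
    (h00 : ∀ x ∈ G0, ∀ y ∈ G0, ⁅x, y⁆ ∈ G0)
    (h01 : ∀ x ∈ G0, ∀ y ∈ G1, ⁅x, y⁆ ∈ G1)
    (h11 : ∀ x ∈ G1, ∀ y ∈ G1, ⁅x, y⁆ ∈ G0)
    (R : G →ₗ[k] G)
    (hR : ∀ x ∈ G1, R x ∈ G0)
    (Gm : Submodule k G)
    (hGm : Gm = Submodule.map (LinearMap.id - R) G1)
    (π : G →ₗ[k] G)
    (hπ0 : ∀ x, π x ∈ G0)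
    (hπm : ∀ x, x - π x ∈ Gm)
    (H : Submodule k G)
    (hH : H = Submodule.span k {x | ∃ a ∈ Gm, ∃ b ∈ Gm, x = π ⁅a, b⁆})
    (D : G → G → G)
    (hD : ∀ X Y, D X Y = R (⁅R X, Y⁆ - ⁅R Y, X⁆) - ⁅R X, R Y⁆ - ⁅X, Y⁆) :
    ((∀ h ∈ H, ∀ x ∈ G0, ⁅h, x⁆ ∈ G0) ∧
     (∀ h ∈ H, ∀ x ∈ Gm, ⁅h, x⁆ ∈ Gm)) ↔
      (∀ X ∈ G1, ∀ Y ∈ G1, ∀ Z ∈ G1,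
        ⁅D X Y, R Z⁆ = R ⁅D X Y, Z⁆) := by
  -- membership in Gm
  have hGmMem : ∀ x, x ∈ Gm ↔ ∃ m ∈ G1, x = m - R m := by
    intro x
    rw [hGm, Submodule.mem_map]
    constructor
    · rintro ⟨m, hm, h⟩
      exact ⟨m, hm, by simpa [eq_comm] using h⟩
    · rintro ⟨m, hm, h⟩
      exact ⟨m, hm, by simp [h.symm]⟩
  have hGmMem' : ∀ m ∈ G1, m - R m ∈ Gm := fun m hm => (hGmMem _).2 ⟨m, hm, rfl⟩
  -- triviality of intersections
  have h01' : ∀ g, g ∈ G0 → g ∈ G1 → g = 0 := fun g hg0 hg1 =>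
    Submodule.disjoint_def.mp hG01.disjoint g hg0 hg1
  have h0m : ∀ g, g ∈ G0 → g ∈ Gm → g = 0 := by
    intro g hg0 hgm
    obtain ⟨m, hm, hme⟩ := (hGmMem g).1 hgm
    have hmm : m = g + R m := by rw [hme]; abel
    have hm0 : m ∈ G0 := hmm ▸ G0.add_mem hg0 (hR m hm)
    have : m = 0 := h01' m hm0 hm
    simp [hme, this]
  -- uniqueness of projection
  have hπeq : ∀ x u, u ∈ G0 → x - u ∈ Gm → π x = u := by
    intro x u hu hxu
    have h1 : π x - u ∈ G0 := G0.sub_mem (hπ0 x) hu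
    have h2 : π x - u ∈ Gm := by
      have := Gm.sub_mem hxu (hπm x)
      simpa using this
    exact sub_eq_zero.mp (h0m _ h1 h2)
  -- D lands in G0
  have hDW : ∀ X ∈ G1, ∀ Y ∈ G1, ⁅R X, Y⁆ - ⁅R Y, X⁆ ∈ G1 := fun X hX Y hY =>
    G1.sub_mem (h01 _ (hR X hX) _ hY) (h01 _ (hR Y hY) _ hX)
  have hD0 : ∀ X ∈ G1, ∀ Y ∈ G1, D X Y ∈ G0 := by
    intro X hX Y hY
    rw [hD]
    exact G0.sub_mem (G0.sub_mem (hR _ (hDW X hX Y hY))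
      (h00 _ (hR X hX) _ (hR Y hY))) (h11 _ hX _ hY)
  -- key computation
  have hkey : ∀ X ∈ G1, ∀ Y ∈ G1, π ⁅X - R X, Y - R Y⁆ = -(D X Y) := by
    intro X hX Y hY
    apply hπeq
    · exact G0.neg_mem (hD0 X hX Y hY)
    · have heq : ⁅X - R X, Y - R Y⁆ - -(D X Y) =
        -((⁅R X, Y⁆ - ⁅R Y, X⁆) - R (⁅R X, Y⁆ - ⁅R Y, X⁆)) := by
        rw [hD]
        simp only [lie_sub, sub_lie, map_sub]
        rw [← lie_skew X (R Y)]
        abel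
      rw [heq]
      exact Gm.neg_mem (hGmMem' _ (hDW X hX Y hY))
  constructor
  · rintro ⟨-, h2⟩ X hX Y hY Z hZ
    have ha : X - R X ∈ Gm := hGmMem' X hX
    have hb : Y - R Y ∈ Gm := hGmMem' Y hY
    have hmem : -(D X Y) ∈ H := by
      rw [hH]
      exact Submodule.subset_span ⟨X - R X, ha, Y - R Y, hb, (hkey X hX Y hY).symm⟩
    have hbr : ⁅-(D X Y), Z - R Z⁆ ∈ Gm := h2 _ hmem _ (hGmMem' Z hZ)
    obtain ⟨m, hm, hme⟩ := (hGmMem _).1 hbr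
    -- -⁅D,Z⁆ + ⁅D,RZ⁆ = m - R m
    have e : m - R m = -⁅D X Y, Z⁆ + ⁅D X Y, R Z⁆ := by
      rw [← hme]; simp only [neg_lie, lie_sub]; abel
    have hsplit : m + ⁅D X Y, Z⁆ = R m + ⁅D X Y, R Z⁆ := by
      have h' : m + ⁅D X Y, Z⁆ - (R m + ⁅D X Y, R Z⁆) = 0 := by
        calc m + ⁅D X Y, Z⁆ - (R m + ⁅D X Y, R Z⁆)
            = (m - R m) - (-⁅D X Y, Z⁆ + ⁅D X Y, R Z⁆) := by abel
          _ = 0 := by rw [e]; abel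
      exact sub_eq_zero.mp h'
    have hL : m + ⁅D X Y, Z⁆ ∈ G1 := G1.add_mem hm (h01 _ (hD0 X hX Y hY) _ hZ)
    have hRt : R m + ⁅D X Y, R Z⁆ ∈ G0 :=
      G0.add_mem (hR m hm) (h00 _ (hD0 X hX Y hY) _ (hR Z hZ))
    have hzero : m + ⁅D X Y, Z⁆ = 0 := h01' _ (hsplit ▸ hRt) hL
    have hmval : m = -⁅D X Y, Z⁆ := eq_neg_of_add_eq_zero_left hzero
    have hzero2 : R m + ⁅D X Y, R Z⁆ = 0 := by rw [← hsplit]; exact hzero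
    calc ⁅D X Y, R Z⁆ = -(R m) := eq_neg_of_add_eq_zero_right hzero2
      _ = R ⁅D X Y, Z⁆ := by rw [hmval, map_neg, neg_neg]
  · intro hcond
    have key : ∀ h ∈ H, (∀ x ∈ G0, ⁅h, x⁆ ∈ G0) ∧ (∀ x ∈ Gm, ⁅h, x⁆ ∈ Gm) := by
      intro h hh
      rw [hH] at hh
      induction hh using Submodule.span_induction with
      | mem g hg =>
        obtain ⟨a, ha, b, hb, rfl⟩ := hg
        obtain ⟨X, hX, rfl⟩ := (hGmMem a).1 ha
        obtain ⟨Y, hY, rfl⟩ := (hGmMem b).1 hb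
        rw [hkey X hX Y hY]
        refine ⟨fun x hx => ?_, fun x hx => ?_⟩
        · rw [neg_lie]
          exact G0.neg_mem (h00 _ (hD0 X hX Y hY) _ hx)
        · obtain ⟨Z, hZ, rfl⟩ := (hGmMem x).1 hx
          have e2 : ⁅-(D X Y), Z - R Z⁆ = -(⁅D X Y, Z⁆ - R ⁅D X Y, Z⁆) := by
            rw [← hcond X hX Y hY Z hZ]
            simp only [neg_lie, lie_sub]; abel
          rw [e2]
          exact Gm.neg_mem (hGmMem' _ (h01 _ (hD0 X hX Y hY) _ hZ))
      | zero => exact ⟨fun x _ => by simp, fun x _ => by simp⟩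
      | add u v _ _ hu hv =>
        exact ⟨fun x hx => by rw [add_lie]; exact G0.add_mem (hu.1 x hx) (hv.1 x hx),
               fun x hx => by rw [add_lie]; exact Gm.add_mem (hu.2 x hx) (hv.2 x hx)⟩
      | smul c u _ hu =>
        exact ⟨fun x hx => by rw [smul_lie]; exact G0.smul_mem c (hu.1 x hx),
               fun x hx => by rw [smul_lie]; exact Gm.smul_mem c (hu.2 x hx)⟩
    exact ⟨fun h hh => (key h hh).1, fun h hh => (key h hh).2⟩
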